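/- Let F be a field of characteristic different from 2 and let R = M_k(F) with k ≥ 2. Let H : R → R be a generalized derivation, i.e., an additive map for which there exists an additive map d : R → R satisfying d(xy) = d(x)y + x d(y) and H(xy) = H(x)y + x d(y) for all x, y ∈ R. Let s, t ≥ 0 be fixed integers and suppose that [x₁,x₂]^s H([x₁,x₂]) [x₁,x₂]^t ∈ Z(R) for all x₁, x₂ ∈ R. Then either there exists λ ∈ F such that H(x) = λx for all x ∈ R, or k = 2 (i.e., R satisfies the standard identity S₄). -/

import Mathlib

open Matrix

namespace Stmt9

variable {F : Type*} [Field F] {k : ℕ}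

lemma third (hk3 : 3 ≤ k) (p q : Fin k) : ∃ a : Fin k, a ≠ p ∧ a ≠ q := by
  by_contra hcon
  push_neg at hcon
  have hsub : (Finset.univ : Finset (Fin k)) ⊆ {p, q} := by
    intro a _
    rcases eq_or_ne a p with rfl | hne
    · exact Finset.mem_insert_self _ _
    · rw [hcon a hne]; exact Finset.mem_insert_of_mem (Finset.mem_singleton_self _)
  have h1 := Finset.card_le_card hsub
  have h2 : ({p, q} : Finset (Fin k)).card ≤ 2 :=
    le_trans (Finset.card_insert_le _ _) (by simp)
  rw [Finset.card_univ, Fintype.card_fin] at h1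
  omega

lemma central_eq {z : Matrix (Fin k) (Fin k) F}
    (hz : ∀ y, z * y = y * z) (a : Fin k) : z = z a a • 1 := by
  ext x y
  have h1 : (z * single y a (1 : F)) x a = z x y := by
    rw [mul_single_apply_same, mul_one]
  rw [hz] at h1
  by_cases hxy : x = y
  · subst hxy
    rw [single_mul_apply_same, one_mul] at h1
    rw [Matrix.smul_apply, Matrix.one_apply_eq, smul_eq_mul, mul_one]
    exact h1.symm
  · have h2 : (single y a (1 : F) * z) x a = 0 := by simp [hxy]
    rw [h2] at h1
    rw [Matrix.smul_apply, Matrix.one_apply_ne hxy, smul_zero]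
    exact h1.symm

lemma pow_cg {R : Type*} [Monoid R] {c g : R} (hcc : c * c = g) (hgc : g * c = c) :
    ∀ s : ℕ, 1 ≤ s → c ^ s = c ∨ c ^ s = g := by
  intro s hs
  induction s with
  | zero => omega
  | succ n ih =>
    rcases Nat.eq_zero_or_pos n with h0 | hn
    · subst h0; left; simp
    · rcases ih hn with hcn | hcn
      · right; rw [pow_succ, hcn, hcc]
      · left; rw [pow_succ, hcn, hgc]

lemma sandwich3 {R : Type*} [Ring R] {A X B w v g : R} (hz : A * X * B = 0)
    (hw : w * A = g) (hv : B * v = g) : g * X * g = 0 := by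
  have he : w * (A * X * B) * v = (w * A) * X * (B * v) := by
    simp only [mul_assoc]
  rw [hw, hv] at he
  rw [← he, hz, mul_zero, zero_mul]

lemma sandwichL {R : Type*} [Ring R] {A X w g : R} (hz : A * X = 0) (hw : w * A = g) :
    g * X = 0 := by
  rw [← hw, mul_assoc, hz, mul_zero]

lemma sandwichR {R : Type*} [Ring R] {X B v g : R} (hz : X * B = 0) (hv : B * v = g) :
    X * g = 0 := by
  rw [← hv, ← mul_assoc, hz, zero_mul]

def cmat (p q : Fin k) (β : F) : Matrix (Fin k) (Fin k) F :=
  single p p 1 + single p q β - single q q 1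

def gmat (p q : Fin k) : Matrix (Fin k) (Fin k) F :=
  single p p 1 + single q q 1

lemma cmat_def (p q : Fin k) (β : F) :
    cmat p q β = single p p 1 + single p q β - single q q 1 := rfl

lemma gmat_def (p q : Fin k) :
    (gmat p q : Matrix (Fin k) (Fin k) F) = single p p 1 + single q q 1 := rfl

variable {p q : Fin k}

lemma cmat_mul_cmat (hpq : p ≠ q) (β : F) : cmat p q β * cmat p q β = gmat p q := by
  rw [cmat_def, gmat_def]
  simp only [sub_mul, mul_sub, add_mul, mul_add]
  simp [hpq, Ne.symm hpq]
  abel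

lemma gmat_mul_cmat (hpq : p ≠ q) (β : F) : gmat p q * cmat p q β = cmat p q β := by
  rw [cmat_def, gmat_def]
  simp only [sub_mul, mul_sub, add_mul, mul_add]
  simp [hpq, Ne.symm hpq]
  try abel

lemma cmat_mul_gmat (hpq : p ≠ q) (β : F) : cmat p q β * gmat p q = cmat p q β := by
  rw [cmat_def, gmat_def]
  simp only [sub_mul, mul_sub, add_mul, mul_add]
  simp [hpq, Ne.symm hpq]
  abel

lemma gmat_mul_gmat (hpq : p ≠ q) : (gmat p q : Matrix (Fin k) (Fin k) F) * gmat p q = gmat p q := by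
  rw [gmat_def]
  simp only [add_mul, mul_add]
  simp [hpq, Ne.symm hpq]
  try abel

lemma cmat_split (p q : Fin k) (β : F) :
    cmat p q 0 + single p q β = cmat p q β := by
  rw [cmat_def, cmat_def, single_zero]
  abel

variable {a : Fin k}

lemma cmat_row_zero (hap : a ≠ p) (haq : a ≠ q) (β : F) (j : Fin k) :
    cmat p q β a j = 0 := by
  rw [cmat_def]
  simp [Matrix.sub_apply, Matrix.add_apply, Ne.symm hap, Ne.symm haq]

lemma cmat_col_zero (hap : a ≠ p) (haq : a ≠ q) (β : F) (j : Fin k) :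
    cmat p q β j a = 0 := by
  rw [cmat_def]
  simp [Matrix.sub_apply, Matrix.add_apply, Ne.symm hap, Ne.symm haq]

lemma gmat_row_zero (hap : a ≠ p) (haq : a ≠ q) (j : Fin k) :
    (gmat p q : Matrix (Fin k) (Fin k) F) a j = 0 := by
  rw [gmat_def]
  simp [Matrix.add_apply, Ne.symm hap, Ne.symm haq]

lemma gmat_col_zero (hap : a ≠ p) (haq : a ≠ q) (j : Fin k) :
    (gmat p q : Matrix (Fin k) (Fin k) F) j a = 0 := by
  rw [gmat_def]
  simp [Matrix.add_apply, Ne.symm hap, Ne.symm haq]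

lemma gmat_mul_apply_left (hpq : p ≠ q) (M : Matrix (Fin k) (Fin k) F) (x y : Fin k)
    (hx : x = p ∨ x = q) : (gmat p q * M : Matrix (Fin k) (Fin k) F) x y = M x y := by
  rw [gmat_def, add_mul]
  rcases hx with rfl | rfl
  · simp [Matrix.add_apply, hpq]
  · simp [Matrix.add_apply, Ne.symm hpq]

lemma mul_gmat_apply_right (hpq : p ≠ q) (M : Matrix (Fin k) (Fin k) F) (x y : Fin k)
    (hy : y = p ∨ y = q) : (M * gmat p q : Matrix (Fin k) (Fin k) F) x y = M x y := by
  rw [gmat_def, mul_add]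
  rcases hy with rfl | rfl
  · simp [Matrix.add_apply, hpq]
  · simp [Matrix.add_apply, Ne.symm hpq]

lemma row_entry (hpq : p ≠ q) {M : Matrix (Fin k) (Fin k) F}
    (h0 : gmat p q * M = 0) (x y : Fin k) (hx : x = p ∨ x = q) : M x y = 0 := by
  have e := gmat_mul_apply_left hpq M x y hx
  rw [h0] at e
  simpa using e.symm

lemma col_entry (hpq : p ≠ q) {M : Matrix (Fin k) (Fin k) F}
    (h0 : M * gmat p q = 0) (x y : Fin k) (hy : y = p ∨ y = q) : M x y = 0 := by
  have e := mul_gmat_apply_right hpq M x y hy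
  rw [h0] at e
  simpa using e.symm

lemma block_entry (hpq : p ≠ q) {M : Matrix (Fin k) (Fin k) F}
    (h0 : gmat p q * M * gmat p q = 0) (x y : Fin k)
    (hx : x = p ∨ x = q) (hy : y = p ∨ y = q) : M x y = 0 := by
  have e : (gmat p q * M * gmat p q : Matrix (Fin k) (Fin k) F) x y = M x y := by
    rw [mul_gmat_apply_right hpq _ x y hy, gmat_mul_apply_left hpq _ x y hx]
  rw [h0] at e
  simpa using e.symm

end Stmt9
/-- Let `char F ≠ 2`, `R = M_k(F)` with `k ≥ 2`, and let `H` be a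
generalized derivation of `R` (with associated derivation `d`).  If
`[x₁,x₂]^s H([x₁,x₂]) [x₁,x₂]^t ∈ Z(R)` for all `x₁, x₂ ∈ R`, then either
`H(x) = λx` for some `λ ∈ F`, or `k = 2` (i.e. `R` satisfies `S₄`). -/
theorem stmt_9 {F : Type*} [Field F] (hF : ringChar F ≠ 2) {k : ℕ} (hk : 2 ≤ k)
    (H d : Matrix (Fin k) (Fin k) F → Matrix (Fin k) (Fin k) F)
    (hHadd : ∀ x y, H (x + y) = H x + H y)
    (hdadd : ∀ x y, d (x + y) = d x + d y)
    (hd : ∀ x y, d (x * y) = d x * y + x * d y)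
    (hH : ∀ x y, H (x * y) = H x * y + x * d y)
    (s t : ℕ)
    (h : ∀ x₁ x₂ : Matrix (Fin k) (Fin k) F,
      ∀ y : Matrix (Fin k) (Fin k) F,
        ((x₁ * x₂ - x₂ * x₁) ^ s * H (x₁ * x₂ - x₂ * x₁) * (x₁ * x₂ - x₂ * x₁) ^ t) * y =
          y * ((x₁ * x₂ - x₂ * x₁) ^ s * H (x₁ * x₂ - x₂ * x₁) * (x₁ * x₂ - x₂ * x₁) ^ t)) :
    (∃ lam : F, ∀ x : Matrix (Fin k) (Fin k) F, H x = lam • x) ∨ k = 2 := by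
  classical
  by_cases hk2 : k = 2
  · right; exact hk2
  left
  have hk3 : 3 ≤ k := by omega
  clear hk2 hk
  -- basic facts
  have hH0 : H 0 = 0 := by
    have h0 := hHadd 0 0
    rw [add_zero] at h0
    exact (left_eq_add.mp h0)
  have R1 : ∀ x y, H (x * y) = H x * y + x * H y - x * H 1 * y := by
    intro x y
    have h1 := hH 1 y
    rw [one_mul, one_mul] at h1
    have hdy : d y = H y - H 1 * y := eq_sub_of_add_eq' h1.symm
    rw [hH x y, hdy, mul_sub, ← mul_assoc]
    abel
  -- the commutator realization
  have hcomeq : ∀ p q : Fin k, p ≠ q → ∀ β : F,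
      single p q (1:F) * (single q p 1 + single q q β)
        - (single q p 1 + single q q β) * single p q 1
      = Stmt9.cmat p q β := by
    intro p q hpq β
    rw [Stmt9.cmat_def]
    simp only [mul_add, add_mul]
    simp [hpq, Ne.symm hpq]
    try abel
  have hcomm : ∀ p q : Fin k, p ≠ q → ∀ β : F, ∀ y,
      (Stmt9.cmat p q β ^ s * H (Stmt9.cmat p q β) * Stmt9.cmat p q β ^ t) * y
        = y * (Stmt9.cmat p q β ^ s * H (Stmt9.cmat p q β) * Stmt9.cmat p q β ^ t) := by
    intro p q hpq β y
    have hc := h (single p q 1) (single q p 1 + single q q β) y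
    rw [hcomeq p q hpq β] at hc
    exact hc
  have hz0 : 1 ≤ s + t → ∀ p q : Fin k, p ≠ q → ∀ β : F,
      Stmt9.cmat p q β ^ s * H (Stmt9.cmat p q β) * Stmt9.cmat p q β ^ t = 0 := by
    intro hst p q hpq β
    obtain ⟨a, hap, haq⟩ := Stmt9.third hk3 p q
    rcases Nat.eq_zero_or_pos s with hs | hs
    · have ht : 1 ≤ t := by omega
      have hdiag : (Stmt9.cmat p q β ^ s * H (Stmt9.cmat p q β) * Stmt9.cmat p q β ^ t) a a = 0 := by
        rw [Matrix.mul_apply]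
        refine Finset.sum_eq_zero fun j _ => ?_
        have hcol : (Stmt9.cmat p q β ^ t) j a = 0 := by
          rcases Stmt9.pow_cg (Stmt9.cmat_mul_cmat hpq β) (Stmt9.gmat_mul_cmat hpq β) t ht with
            hh | hh <;> rw [hh]
          · exact Stmt9.cmat_col_zero hap haq β j
          · exact Stmt9.gmat_col_zero hap haq j
        rw [hcol, mul_zero]
      rw [Stmt9.central_eq (hcomm p q hpq β) a, hdiag, zero_smul]
    · have hdiag : (Stmt9.cmat p q β ^ s * H (Stmt9.cmat p q β) * Stmt9.cmat p q β ^ t) a a = 0 := by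
        rw [mul_assoc, Matrix.mul_apply]
        refine Finset.sum_eq_zero fun j _ => ?_
        have hrow : (Stmt9.cmat p q β ^ s) a j = 0 := by
          rcases Stmt9.pow_cg (Stmt9.cmat_mul_cmat hpq β) (Stmt9.gmat_mul_cmat hpq β) s hs with
            hh | hh <;> rw [hh]
          · exact Stmt9.cmat_row_zero hap haq β j
          · exact Stmt9.gmat_row_zero hap haq j
        rw [hrow, zero_mul]
      rw [Stmt9.central_eq (hcomm p q hpq β) a, hdiag, zero_smul]
  -- the transport identity
  have trans1 : ∀ (p a q : Fin k) (β : F),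
      H (single p q β) = H (single p a β) * single a q 1
        + single p a β * H (single a q 1)
        - single p a β * H 1 * single a q 1 := by
    intro p a q β
    have hR := R1 (single p a β) (single a q 1)
    rw [single_mul_single_same, mul_one] at hR
    exact hR
  -- the master lemma
  have master : (∀ p q : Fin k, p ≠ q → ∀ β : F, H (single p q β) = 0) →
      ∃ lam : F, ∀ x, H x = lam • x := by
    intro core
    have bdiag : ∀ l : Fin k, H 1 l l = 0 := by
      intro l
      obtain ⟨i, hil, -⟩ := Stmt9.third hk3 l l
      obtain ⟨j, hji, hjl⟩ := Stmt9.third hk3 i l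
      have hR := R1 (single i l (1:F)) (single l j 1)
      rw [single_mul_single_same, one_mul] at hR
      rw [core i j (Ne.symm hji) 1, core i l hil 1, core l j (Ne.symm hjl) 1,
        zero_mul, mul_zero, zero_add, zero_sub] at hR
      have h2 : single i l (1:F) * H 1 * single l j 1 = 0 :=
        neg_eq_zero.mp hR.symm
      have h3 : (single i l (1:F) * H 1 * single l j 1 : Matrix (Fin k) (Fin k) F) i j = H 1 l l := by
        rw [mul_single_apply_same, single_mul_apply_same,
          one_mul, mul_one]
      rw [h2] at h3
      simpa using h3.symm
    have Hqq : ∀ (q : Fin k) (β : F), H (single q q β) = 0 := by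
      intro q β
      obtain ⟨l, hlq, -⟩ := Stmt9.third hk3 q q
      have hR := trans1 q l q β
      have h2 : single q l β * H 1 * single l q 1 = 0 := by
        ext x y
        by_cases hyq : y = q
        · by_cases hxq : x = q
          · simp [hyq, hxq, bdiag l]
          · simp [hyq, hxq]
        · simp [hyq]
      rw [core q l (Ne.symm hlq) β, core l q hlq 1, h2, zero_mul, mul_zero] at hR
      simpa using hR
    have boffdiag : ∀ x y : Fin k, x ≠ y → H 1 x y = 0 := by
      intro x y hxy
      have hR := R1 (single x x (1:F)) (single y x 1)
      rw [single_mul_single_of_ne (h := hxy)] at hR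
      rw [hH0, Hqq x 1, core y x (Ne.symm hxy) 1, zero_mul, mul_zero, zero_add,
        zero_sub] at hR
      have h2 : single x x (1:F) * H 1 * single y x 1 = 0 :=
        neg_eq_zero.mp hR.symm
      have h3 : (single x x (1:F) * H 1 * single y x 1 : Matrix (Fin k) (Fin k) F) x x = H 1 x y := by
        rw [mul_single_apply_same, single_mul_apply_same,
          one_mul, mul_one]
      rw [h2] at h3
      simpa using h3.symm
    have Hsum : ∀ {ι : Type} [DecidableEq ι] (sf : Finset ι)
        (f : ι → Matrix (Fin k) (Fin k) F),
        H (∑ i ∈ sf, f i) = ∑ i ∈ sf, H (f i) := by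
      intro ι _ sf f
      induction sf using Finset.induction_on with
      | empty => simpa using hH0
      | @insert a s0 ha ih => rw [Finset.sum_insert ha, hHadd, ih, Finset.sum_insert ha]
    refine ⟨0, fun x => ?_⟩
    rw [zero_smul]
    conv_lhs => rw [matrix_eq_sum_single x]
    rw [Hsum]
    refine Finset.sum_eq_zero fun i _ => ?_
    rw [Hsum]
    refine Finset.sum_eq_zero fun j _ => ?_
    by_cases hij : i = j
    · subst hij; exact Hqq i (x i i)
    · exact core i j hij (x i j)
  -- case analysis on s and t
  rcases Nat.eq_zero_or_pos s with hs0 | hs1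
  · rcases Nat.eq_zero_or_pos t with ht0 | ht1
    · -- Branch D : s = 0, t = 0
      subst hs0; subst ht0
      have centralstd : ∀ p q : Fin k, p ≠ q → ∀ β : F, ∀ y,
          H (single p q β) * y = y * H (single p q β) := by
        intro p q hpq β y
        have hc : ∀ γ : F, ∀ y, H (Stmt9.cmat p q γ) * y = y * H (Stmt9.cmat p q γ) := by
          intro γ y
          have hc2 := hcomm p q hpq γ y
          rw [pow_zero, one_mul, mul_one] at hc2
          exact hc2
        have hsplit : H (single p q β)
            = H (Stmt9.cmat p q β) - H (Stmt9.cmat p q 0) := by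
          have hs : H (Stmt9.cmat p q β) = H (Stmt9.cmat p q 0) + H (single p q β) := by
            rw [← hHadd, Stmt9.cmat_split]
          exact eq_sub_of_add_eq' hs.symm
        rw [hsplit, sub_mul, mul_sub, hc β y, hc 0 y]
      apply master
      intro p q hpq β
      obtain ⟨a, hap, haq⟩ := Stmt9.third hk3 p q
      have hY := Stmt9.central_eq (centralstd p q hpq β) q
      have hMa := Stmt9.central_eq (centralstd p a (Ne.symm hap) β) q
      have hqa : H (single p a β) q a = 0 := by
        rw [hMa]
        rw [Matrix.smul_apply, Matrix.one_apply_ne (Ne.symm haq), smul_zero]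
      have hqq : H (single p q β) q q = 0 := by
        rw [trans1 p a q β]
        rw [Matrix.sub_apply, Matrix.add_apply]
        rw [mul_single_apply_same, mul_single_apply_same]
        rw [hqa]
        have e2 : (single p a β * H (single a q 1) : Matrix (Fin k) (Fin k) F) q q = 0 := by
          simp [Ne.symm hpq]
        have e3 : (single p a β * H 1 : Matrix (Fin k) (Fin k) F) q a = 0 := by
          simp [Ne.symm hpq]
        rw [e2, e3]
        simp
      rw [hY, hqq, zero_smul]
    · -- Branch B : s = 0, t ≥ 1
      subst hs0
      have colfact : ∀ p q : Fin k, p ≠ q → ∀ β : F,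
          H (Stmt9.cmat p q β) * Stmt9.gmat p q = 0 := by
        intro p q hpq β
        have hz := hz0 (by omega) p q hpq β
        rw [pow_zero, one_mul] at hz
        rcases Stmt9.pow_cg (Stmt9.cmat_mul_cmat hpq β) (Stmt9.gmat_mul_cmat hpq β) t ht1 with
          hh | hh <;> rw [hh] at hz
        · exact Stmt9.sandwichR hz (Stmt9.cmat_mul_cmat hpq β)
        · exact Stmt9.sandwichR hz (Stmt9.gmat_mul_gmat hpq)
      have colstd : ∀ p q : Fin k, p ≠ q → ∀ β : F,
          H (single p q β) * Stmt9.gmat p q = 0 := by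
        intro p q hpq β
        have h1 := colfact p q hpq β
        have h0 := colfact p q hpq 0
        have hsplit : H (Stmt9.cmat p q β) = H (Stmt9.cmat p q 0) + H (single p q β) := by
          rw [← hHadd, Stmt9.cmat_split]
        rw [hsplit, add_mul, h0, zero_add] at h1
        exact h1
      apply master
      intro p q hpq β
      ext x y
      rw [Matrix.zero_apply]
      by_cases hy : y = p ∨ y = q
      · exact Stmt9.col_entry hpq (colstd p q hpq β) x y hy
      · push_neg at hy
        rw [trans1 p y q β]
        have hblk : H (single y q 1) y y = 0 :=
          Stmt9.col_entry hy.2 (colstd y q hy.2 1) y y (Or.inl rfl)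
        by_cases hxp : x = p
        · subst hxp
          simp [hy.2, hblk, Ne.symm hy.2, single_apply_of_ne]
        · simp [hy.2, hxp, Ne.symm hxp, single_apply_of_ne]
  · rcases Nat.eq_zero_or_pos t with ht0 | ht1
    · -- Branch A : s ≥ 1, t = 0
      subst ht0
      have rowfact : ∀ p q : Fin k, p ≠ q → ∀ β : F,
          Stmt9.gmat p q * H (Stmt9.cmat p q β) = 0 := by
        intro p q hpq β
        have hz := hz0 (by omega) p q hpq β
        rw [pow_zero, mul_one] at hz
        rcases Stmt9.pow_cg (Stmt9.cmat_mul_cmat hpq β) (Stmt9.gmat_mul_cmat hpq β) s hs1 with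
          hh | hh <;> rw [hh] at hz
        · exact Stmt9.sandwichL hz (Stmt9.cmat_mul_cmat hpq β)
        · exact Stmt9.sandwichL hz (Stmt9.gmat_mul_gmat hpq)
      have rowstd : ∀ p q : Fin k, p ≠ q → ∀ β : F,
          Stmt9.gmat p q * H (single p q β) = 0 := by
        intro p q hpq β
        have h1 := rowfact p q hpq β
        have h0 := rowfact p q hpq 0
        have hsplit : H (Stmt9.cmat p q β) = H (Stmt9.cmat p q 0) + H (single p q β) := by
          rw [← hHadd, Stmt9.cmat_split]
        rw [hsplit, mul_add, h0, zero_add] at h1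
        exact h1
      apply master
      intro p q hpq β
      ext x y
      rw [Matrix.zero_apply]
      by_cases hx : x = p ∨ x = q
      · exact Stmt9.row_entry hpq (rowstd p q hpq β) x y hx
      · push_neg at hx
        rw [trans1 p x q β]
        have hblk : H (single p x β) x x = 0 :=
          Stmt9.row_entry (Ne.symm hx.1) (rowstd p x (Ne.symm hx.1) β) x x (Or.inr rfl)
        by_cases hyq : y = q
        · subst hyq
          simp [hx.1, hblk, Ne.symm hx.1, single_apply_of_ne]
        · simp [hx.1, hyq, Ne.symm hyq, single_apply_of_ne]
    · -- Branch C : s ≥ 1, t ≥ 1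
      have blockfact : ∀ p q : Fin k, p ≠ q → ∀ β : F,
          Stmt9.gmat p q * H (Stmt9.cmat p q β) * Stmt9.gmat p q = 0 := by
        intro p q hpq β
        have hz := hz0 (by omega) p q hpq β
        rcases Stmt9.pow_cg (Stmt9.cmat_mul_cmat hpq β) (Stmt9.gmat_mul_cmat hpq β) s hs1 with
          hh | hh <;>
          rcases Stmt9.pow_cg (Stmt9.cmat_mul_cmat hpq β) (Stmt9.gmat_mul_cmat hpq β) t ht1 with
            hh2 | hh2 <;> rw [hh, hh2] at hz
        · exact Stmt9.sandwich3 hz (Stmt9.cmat_mul_cmat hpq β) (Stmt9.cmat_mul_cmat hpq β)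
        · exact Stmt9.sandwich3 hz (Stmt9.cmat_mul_cmat hpq β) (Stmt9.gmat_mul_gmat hpq)
        · exact Stmt9.sandwich3 hz (Stmt9.gmat_mul_gmat hpq) (Stmt9.cmat_mul_cmat hpq β)
        · exact Stmt9.sandwich3 hz (Stmt9.gmat_mul_gmat hpq) (Stmt9.gmat_mul_gmat hpq)
      have blockstd : ∀ p q : Fin k, p ≠ q → ∀ β : F,
          Stmt9.gmat p q * H (single p q β) * Stmt9.gmat p q = 0 := by
        intro p q hpq β
        have h1 := blockfact p q hpq β
        have h0 := blockfact p q hpq 0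
        have hsplit : H (Stmt9.cmat p q β) = H (Stmt9.cmat p q 0) + H (single p q β) := by
          rw [← hHadd, Stmt9.cmat_split]
        rw [hsplit, mul_add, add_mul, h0, zero_add] at h1
        exact h1
      apply master
      intro p q hpq β
      ext x y
      rw [Matrix.zero_apply]
      by_cases hx : x = p ∨ x = q
      · by_cases hy : y = p ∨ y = q
        · exact Stmt9.block_entry hpq (blockstd p q hpq β) x y hx hy
        · push_neg at hy
          rw [trans1 p y q β]
          have hblk : H (single y q 1) y y = 0 :=
            Stmt9.block_entry hy.2 (blockstd y q hy.2 1) y y (Or.inl rfl) (Or.inl rfl)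
          by_cases hxp : x = p
          · subst hxp
            simp [hy.2, hblk, Ne.symm hy.2, single_apply_of_ne]
          · simp [hy.2, hxp, Ne.symm hxp, single_apply_of_ne]
      · push_neg at hx
        rw [trans1 p x q β]
        have hblk : H (single p x β) x x = 0 :=
          Stmt9.block_entry (Ne.symm hx.1) (blockstd p x (Ne.symm hx.1) β) x x
            (Or.inr rfl) (Or.inr rfl)
        by_cases hyq : y = q
        · subst hyq
          simp [hx.1, hblk, Ne.symm hx.1, single_apply_of_ne]
        · simp [hx.1, hyq, Ne.symm hyq, single_apply_of_ne]
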